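/- For AVRG with step size μ > 0, the forward inner difference in epoch t ≥ 1 satisfies Σ_{i=0}^{N−1} E‖w_i^t − w_0^t‖² ≤ 3μ²δ²N² Σ_{i=0}^{N−1} E‖w_i^t − w_0^t‖² + μ²δ²N² ( Σ_{i=0}^{N−1} E‖w_N^{t−1} − w_i^{t−1}‖² + N · E‖w̃_0^t‖² ). -/

import Mathlib

open MeasureTheory ProbabilityTheory Finset
open scoped RealInnerProductSpace ENNReal

private lemma finRange_map2 {Ω α β γ : Type*} (op : α → β → γ) {f : Ω → α} {g : Ω → β}
    (hf : (Set.range f).Finite) (hg : (Set.range g).Finite) :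
    (Set.range fun ω => op (f ω) (g ω)).Finite :=
  (hf.image2 op hg).subset (by
    rintro _ ⟨ω, rfl⟩; exact Set.mem_image2_of_mem ⟨ω, rfl⟩ ⟨ω, rfl⟩)

private lemma finRange_map {Ω α β : Type*} (op : α → β) {f : Ω → α}
    (hf : (Set.range f).Finite) : (Set.range fun ω => op (f ω)).Finite :=
  (hf.image op).subset (by rintro _ ⟨ω, rfl⟩; exact ⟨f ω, ⟨ω, rfl⟩, rfl⟩)

private lemma finRange_sum {Ω ι E : Type*} [AddCommMonoid E] (s : Finset ι) (f : ι → Ω → E)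
    (h : ∀ i ∈ s, (Set.range (f i)).Finite) :
    (Set.range fun ω => ∑ i ∈ s, f i ω).Finite := by
  classical
  induction s using Finset.induction with
  | empty => simpa using Set.finite_singleton (0 : E) |>.subset Set.range_const_subset
  | @insert a s ha ih =>
    simp only [Finset.sum_insert ha]
    exact finRange_map2 (· + ·) (h a (mem_insert_self a s))
      (ih fun i hi => h i (mem_insert_of_mem hi))

private lemma sum_range_sq_le_cube (N : ℕ) :
    ∑ i ∈ Finset.range N, (i : ℝ) ^ 2 ≤ (N : ℝ) ^ 3 / 3 := by
  induction N with
  | zero => simp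
  | succ n ih =>
    rw [Finset.sum_range_succ]
    push_cast
    have h1 : ((n : ℝ) + 1) ^ 3 / 3 = (n : ℝ) ^ 3 / 3 + (n : ℝ) ^ 2 + (n : ℝ) + 1 / 3 := by ring
    have h2 : (0 : ℝ) ≤ (n : ℝ) := Nat.cast_nonneg n
    linarith

private lemma norm_add₃_sq_le {E : Type*} [SeminormedAddCommGroup E] (u v z : E) :
    ‖u + v + z‖ ^ 2 ≤ 3 * (‖u‖ ^ 2 + ‖v‖ ^ 2 + ‖z‖ ^ 2) := by
  have h := norm_add₃_le (a := u) (b := v) (c := z)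
  nlinarith [norm_nonneg u, norm_nonneg v, norm_nonneg z, norm_nonneg (u + v + z),
    sq_nonneg (‖u‖ - ‖v‖), sq_nonneg (‖v‖ - ‖z‖), sq_nonneg (‖u‖ - ‖z‖)]

/-
Setup: the amortized variance-reduced gradient (AVRG) algorithm under random
reshuffling.  `σp t` is the uniformly distributed random permutation of epoch
`t` (0-based: `σp t ω i` is the sample index σᵗ(i+1) selected at iteration `i`
of epoch `t`); `w t i ω` is the iterate w_iᵗ and `g t ω` the amortized
gradient estimate gᵗ.  `Qg n` is the gradient of the loss w ↦ Q(w; x_n), δ its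
Lipschitz constant, ν the strong-convexity constant of J = (1/N)∑ₙ Q(·; xₙ),
and `wstar` the minimizer of J.
-/
set_option maxHeartbeats 1000000 in
theorem stmt_8
    {M N : ℕ} (hM : 1 ≤ M) (hN : 1 ≤ N)
    {Ω : Type} [MeasurableSpace Ω] (P : Measure Ω) [IsProbabilityMeasure P]
    (σp : ℕ → Ω → Equiv.Perm (Fin N))
    (hσmeas : ∀ t, @Measurable Ω (Equiv.Perm (Fin N)) _ ⊤ (σp t))
    (hσunif : ∀ t (π : Equiv.Perm (Fin N)),
      P {ω | σp t ω = π} = ((Nat.factorial N : ℝ≥0∞))⁻¹)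
    (hσindep : iIndepFun (m := fun _ : ℕ => (⊤ : MeasurableSpace (Equiv.Perm (Fin N)))) σp P)
    (Q : Fin N → EuclideanSpace ℝ (Fin M) → ℝ)
    (Qg : Fin N → EuclideanSpace ℝ (Fin M) → EuclideanSpace ℝ (Fin M))
    (δ ν : ℝ) (hδ : 0 < δ) (hν : 0 < ν)
    (hQdiff : ∀ n x, HasGradientAt (Q n) (Qg n x) x)
    (hQconv : ∀ n, ConvexOn ℝ Set.univ (Q n))
    (hLip : ∀ n x y, ‖Qg n x - Qg n y‖ ≤ δ * ‖x - y‖)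
    (hSC : ∀ x y : EuclideanSpace ℝ (Fin M),
      ν * ‖x - y‖ ^ 2 ≤ ⟪((N : ℝ)⁻¹ • ∑ n, Qg n x) - ((N : ℝ)⁻¹ • ∑ n, Qg n y), x - y⟫)
    (wstar : EuclideanSpace ℝ (Fin M))
    (hstar : ∑ n, Qg n wstar = 0)
    (μ : ℝ) (hμpos : 0 < μ)
    (w : ℕ → ℕ → Ω → EuclideanSpace ℝ (Fin M))
    (g : ℕ → Ω → EuclideanSpace ℝ (Fin M))
    (hw00 : ∀ ω, w 0 0 ω = 0)
    (hg0 : ∀ ω, g 0 ω = 0)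
    (hwrec : ∀ (t : ℕ) (i : Fin N) (ω : Ω),
      w t ((i : ℕ) + 1) ω = w t (i : ℕ) ω - μ •
        (Qg (σp t ω i) (w t (i : ℕ) ω) - Qg (σp t ω i) (w t 0 ω) + g t ω))
    (hgrec : ∀ (t : ℕ) (ω : Ω),
      g (t + 1) ω = (N : ℝ)⁻¹ • ∑ i : Fin N, Qg (σp t ω i) (w t (i : ℕ) ω))
    (hwepoch : ∀ (t : ℕ) (ω : Ω), w (t + 1) 0 ω = w t N ω)
    :
    -- AVRG forward inner-difference bound.
    ∀ t : ℕ, 1 ≤ t →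
      ∑ i ∈ Finset.range N, ∫ ω, ‖w t i ω - w t 0 ω‖ ^ 2 ∂P ≤
        3 * μ ^ 2 * δ ^ 2 * N ^ 2 *
            (∑ i ∈ Finset.range N, ∫ ω, ‖w t i ω - w t 0 ω‖ ^ 2 ∂P) +
          μ ^ 2 * δ ^ 2 * N ^ 2 *
            ((∑ i ∈ Finset.range N, ∫ ω, ‖w (t - 1) N ω - w (t - 1) i ω‖ ^ 2 ∂P) +
              N * ∫ ω, ‖wstar - w t 0 ω‖ ^ 2 ∂P) := by
  classical
  letI : MeasurableSpace (Equiv.Perm (Fin N)) := ⊤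
  haveI : MeasurableSingletonClass (Equiv.Perm (Fin N)) := ⟨fun _ => trivial⟩
  have hNpos : (0 : ℝ) < N := by exact_mod_cast hN
  have hNne : (N : ℝ) ≠ 0 := hNpos.ne'
  have hQgcont : ∀ n, Continuous (Qg n) := by
    intro n
    refine (LipschitzWith.of_dist_le_mul (K := ⟨δ, hδ.le⟩) ?_).continuous
    intro x y
    rw [dist_eq_norm, dist_eq_norm]; exact hLip n x y
  have hmeasQ : ∀ (t' : ℕ) (i' : Fin N) (x : Ω → EuclideanSpace ℝ (Fin M)), Measurable x →
      Measurable fun ω => Qg (σp t' ω i') (x ω) := by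
    intro t' i' x hx
    have h1 : Measurable fun p : EuclideanSpace ℝ (Fin M) × Equiv.Perm (Fin N) =>
        Qg (p.2 i') p.1 :=
      measurable_from_prod_countable_left fun π => (hQgcont (π i')).measurable
    exact h1.comp (hx.prodMk (hσmeas t'))
  have hfinQ : ∀ (t' : ℕ) (i' : Fin N) (x : Ω → EuclideanSpace ℝ (Fin M)),
      (Set.range x).Finite → (Set.range fun ω => Qg (σp t' ω i') (x ω)).Finite := by
    intro t' i' x hx
    exact finRange_map2 (fun y (π : Equiv.Perm (Fin N)) => Qg (π i') y) hx
      (Set.finite_univ.subset (Set.subset_univ _))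
  have hstepw : ∀ t', Measurable (w t' 0) → (Set.range (w t' 0)).Finite →
      Measurable (g t') → (Set.range (g t')).Finite →
      ∀ i, i ≤ N → Measurable (w t' i) ∧ (Set.range (w t' i)).Finite := by
    intro t' hw0m hw0f hgm hgf i
    induction i with
    | zero => exact fun _ => ⟨hw0m, hw0f⟩
    | succ i ih =>
      intro hiN
      have hi : i < N := hiN
      obtain ⟨hm, hf⟩ := ih (Nat.le_of_succ_le hiN)
      have hrw : w t' (i + 1) = fun ω => w t' i ω -
          μ • (Qg (σp t' ω ⟨i, hi⟩) (w t' i ω) - Qg (σp t' ω ⟨i, hi⟩) (w t' 0 ω) + g t' ω) := by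
        funext ω; exact hwrec t' ⟨i, hi⟩ ω
      rw [hrw]
      constructor
      · exact hm.sub ((((hmeasQ t' ⟨i, hi⟩ _ hm).sub (hmeasQ t' ⟨i, hi⟩ _ hw0m)).add
          hgm).const_smul μ)
      · refine finRange_map2 (fun a b => a - μ • b) hf ?_
        refine finRange_map2 (· + ·) ?_ hgf
        exact finRange_map2 Sub.sub (hfinQ t' _ _ hf) (hfinQ t' _ _ hw0f)
  have hkey : ∀ t', (∀ i, i ≤ N → Measurable (w t' i) ∧ (Set.range (w t' i)).Finite)
      ∧ Measurable (g t') ∧ (Set.range (g t')).Finite := by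
    intro t'
    induction t' with
    | zero =>
      have hg0' : g 0 = fun _ => (0 : EuclideanSpace ℝ (Fin M)) := funext hg0
      have hw0' : w 0 0 = fun _ => (0 : EuclideanSpace ℝ (Fin M)) := funext hw00
      have hgm : Measurable (g 0) := by rw [hg0']; exact measurable_const
      have hgf : (Set.range (g 0)).Finite := by
        rw [hg0']; exact (Set.finite_singleton 0).subset Set.range_const_subset
      refine ⟨hstepw 0 ?_ ?_ hgm hgf, hgm, hgf⟩
      · rw [hw0']; exact measurable_const
      · rw [hw0']; exact (Set.finite_singleton 0).subset Set.range_const_subset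
    | succ t' ih =>
      obtain ⟨hwm, hgm, hgf⟩ := ih
      have hgrw : g (t' + 1) = fun ω => (N : ℝ)⁻¹ • ∑ i : Fin N, Qg (σp t' ω i) (w t' (i : ℕ) ω) :=
        funext (hgrec t')
      have hgm' : Measurable (g (t' + 1)) := by
        rw [hgrw]
        exact (Finset.measurable_sum Finset.univ fun i _ =>
          hmeasQ t' i _ (hwm i i.isLt.le).1).const_smul ((N : ℝ)⁻¹)
      have hgf' : (Set.range (g (t' + 1))).Finite := by
        rw [hgrw]
        exact finRange_map ((N : ℝ)⁻¹ • ·) (finRange_sum Finset.univ _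
          fun i _ => hfinQ t' i _ (hwm i i.isLt.le).2)
      have hwrw : w (t' + 1) 0 = w t' N := funext (hwepoch t')
      refine ⟨hstepw (t' + 1) ?_ ?_ hgm' hgf', hgm', hgf'⟩
      · rw [hwrw]; exact (hwm N le_rfl).1
      · rw [hwrw]; exact (hwm N le_rfl).2
  have hintg : ∀ (u v : Ω → EuclideanSpace ℝ (Fin M)), Measurable u → Measurable v →
      (Set.range u).Finite → (Set.range v).Finite →
      Integrable (fun ω => ‖u ω - v ω‖ ^ 2) P := by
    intro u v hum hvm huf hvf
    have hfin : (Set.range fun ω => ‖u ω - v ω‖ ^ 2).Finite :=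
      finRange_map2 (fun a b => ‖a - b‖ ^ 2) huf hvf
    obtain ⟨C, hC⟩ := hfin.bddAbove
    have hmeas : Measurable fun ω => ‖u ω - v ω‖ ^ 2 := (hum.sub hvm).norm.pow_const 2
    refine (integrable_const C).mono' hmeas.aestronglyMeasurable (ae_of_all _ fun ω => ?_)
    rw [Real.norm_of_nonneg (by positivity)]
    exact hC ⟨ω, rfl⟩
  intro t ht
  obtain ⟨s, rfl⟩ : ∃ s, t = s + 1 := ⟨t - 1, (Nat.succ_pred_eq_of_pos ht).symm⟩
  simp only [Nat.add_sub_cancel]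
  -- pointwise inequality
  have hpt : ∀ ω, ∑ i ∈ Finset.range N, ‖w (s+1) i ω - w (s+1) 0 ω‖ ^ 2 ≤
      3 * μ ^ 2 * δ ^ 2 * (N : ℝ) ^ 2 *
        (∑ i ∈ Finset.range N, ‖w (s+1) i ω - w (s+1) 0 ω‖ ^ 2) +
      μ ^ 2 * δ ^ 2 * (N : ℝ) ^ 2 *
        ((∑ i ∈ Finset.range N, ‖w s N ω - w s i ω‖ ^ 2) +
          N * ‖wstar - w (s+1) 0 ω‖ ^ 2) := by
    intro ω
    set v0 := w (s+1) 0 ω with hv0def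
    set Sq := ∑ i ∈ Finset.range N, ‖w (s+1) i ω - v0‖ ^ 2 with hSqdef
    set T := ∑ i ∈ Finset.range N, ‖w s N ω - w s i ω‖ ^ 2 with hTdef
    set R := ‖wstar - v0‖ ^ 2 with hRdef
    have hSqnn : 0 ≤ Sq := by
      rw [hSqdef]; exact Finset.sum_nonneg fun _ _ => by positivity
    have hTnn : 0 ≤ T := by
      rw [hTdef]; exact Finset.sum_nonneg fun _ _ => by positivity
    have hRnn : 0 ≤ R := by rw [hRdef]; positivity
    clear_value Sq T R
    set C := (N : ℝ)⁻¹ • ∑ n, Qg n v0 with hCdef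
    set B := g (s+1) ω - C with hBdef
    have hGBC : g (s+1) ω = B + C := by rw [hBdef]; abel
    set A : ℕ → EuclideanSpace ℝ (Fin M) := fun j =>
      if h : j < N then Qg (σp (s+1) ω ⟨j, h⟩) (w (s+1) j ω) - Qg (σp (s+1) ω ⟨j, h⟩) v0
      else 0 with hAdef
    -- representation of the inner difference
    have hrep : ∀ i, i ≤ N → w (s+1) i ω - v0 =
        -(μ • ∑ j ∈ Finset.range i, A j) + (-((i : ℝ) * μ)) • B + (-((i : ℝ) * μ)) • C := by
      intro i
      induction i with
      | zero => intro _; simp [hv0def]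
      | succ i ih =>
        intro hiN
        have hi : i < N := hiN
        have hAi : A i = Qg (σp (s+1) ω ⟨i, hi⟩) (w (s+1) i ω) - Qg (σp (s+1) ω ⟨i, hi⟩) v0 := by
          simp only [hAdef]; rw [dif_pos hi]
        have hw' : w (s+1) (i+1) ω = w (s+1) i ω - μ • (A i + g (s+1) ω) := by
          rw [hAi]; exact hwrec (s+1) ⟨i, hi⟩ ω
        calc w (s+1) (i+1) ω - v0
            = (w (s+1) i ω - v0) - μ • (A i + g (s+1) ω) := by rw [hw']; abel
          _ = (-(μ • ∑ j ∈ Finset.range i, A j) + (-((i : ℝ) * μ)) • B + (-((i : ℝ) * μ)) • C)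
              - μ • (A i + (B + C)) := by rw [ih hi.le, hGBC]
          _ = -(μ • ∑ j ∈ Finset.range (i+1), A j) + (-(((i:ℕ)+1 : ℝ) * μ)) • B
              + (-(((i:ℕ)+1 : ℝ) * μ)) • C := by
              rw [Finset.sum_range_succ]; module
          _ = -(μ • ∑ j ∈ Finset.range (i+1), A j) + (-(((i+1 : ℕ) : ℝ) * μ)) • B
              + (-(((i+1 : ℕ) : ℝ) * μ)) • C := by push_cast; ring_nf
    have hnormA : ∀ j, j < N → ‖A j‖ ≤ δ * ‖w (s+1) j ω - v0‖ := by
      intro j hj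
      have hAj : A j = Qg (σp (s+1) ω ⟨j, hj⟩) (w (s+1) j ω) - Qg (σp (s+1) ω ⟨j, hj⟩) v0 := by
        simp only [hAdef]; rw [dif_pos hj]
      rw [hAj]; exact hLip _ _ _
    -- bound on B
    have hB2 : ‖B‖ ^ 2 ≤ δ ^ 2 / N * T := by
      have hveq : v0 = w s N ω := hwepoch s ω
      have hC2 : C = (N : ℝ)⁻¹ • ∑ k : Fin N, Qg (σp s ω k) (w s N ω) := by
        rw [hCdef, hveq, Equiv.sum_comp (σp s ω) (fun n => Qg n (w s N ω))]
      have hBrw : B = (N : ℝ)⁻¹ •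
          ∑ k : Fin N, (Qg (σp s ω k) (w s (k : ℕ) ω) - Qg (σp s ω k) (w s N ω)) := by
        rw [hBdef, hgrec s ω, hC2, ← smul_sub, ← Finset.sum_sub_distrib]
      have h1 : ‖∑ k : Fin N, (Qg (σp s ω k) (w s (k : ℕ) ω) - Qg (σp s ω k) (w s N ω))‖ ^ 2
          ≤ (N : ℝ) * (δ ^ 2 * T) := by
        calc ‖∑ k : Fin N, (Qg (σp s ω k) (w s (k : ℕ) ω) - Qg (σp s ω k) (w s N ω))‖ ^ 2
            ≤ (∑ k : Fin N, ‖Qg (σp s ω k) (w s (k : ℕ) ω) - Qg (σp s ω k) (w s N ω)‖) ^ 2 :=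
              pow_le_pow_left₀ (norm_nonneg _) (norm_sum_le _ _) 2
          _ ≤ (Finset.univ : Finset (Fin N)).card *
              ∑ k : Fin N, ‖Qg (σp s ω k) (w s (k : ℕ) ω) - Qg (σp s ω k) (w s N ω)‖ ^ 2 :=
              sq_sum_le_card_mul_sum_sq
          _ ≤ (N : ℝ) * ∑ k : Fin N, (δ ^ 2 * ‖w s N ω - w s (k : ℕ) ω‖ ^ 2) := by
              rw [Finset.card_univ, Fintype.card_fin]
              gcongr with k hk
              have := hLip (σp s ω k) (w s (k : ℕ) ω) (w s N ω)
              calc ‖Qg (σp s ω k) (w s (k : ℕ) ω) - Qg (σp s ω k) (w s N ω)‖ ^ 2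
                  ≤ (δ * ‖w s (k : ℕ) ω - w s N ω‖) ^ 2 :=
                    pow_le_pow_left₀ (norm_nonneg _) this 2
                _ = δ ^ 2 * ‖w s N ω - w s (k : ℕ) ω‖ ^ 2 := by
                    rw [norm_sub_rev]; ring
          _ = (N : ℝ) * (δ ^ 2 * T) := by
              rw [← Finset.mul_sum, hTdef,
                Fin.sum_univ_eq_sum_range (fun i => ‖w s N ω - w s i ω‖ ^ 2) N]
      have hBn : ‖B‖ ^ 2 = ((N : ℝ)⁻¹) ^ 2 *
          ‖∑ k : Fin N, (Qg (σp s ω k) (w s (k : ℕ) ω) - Qg (σp s ω k) (w s N ω))‖ ^ 2 := by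
        rw [hBrw, norm_smul, mul_pow, Real.norm_eq_abs, sq_abs]
      rw [hBn]
      calc ((N : ℝ)⁻¹) ^ 2 * ‖_‖ ^ 2 ≤ ((N : ℝ)⁻¹) ^ 2 * ((N : ℝ) * (δ ^ 2 * T)) :=
            mul_le_mul_of_nonneg_left h1 (by positivity)
        _ = δ ^ 2 / N * T := by field_simp
    -- bound on C
    have hCb : ‖C‖ ^ 2 ≤ δ ^ 2 * R := by
      have h0 : C = (N : ℝ)⁻¹ • ∑ n, (Qg n v0 - Qg n wstar) := by
        rw [hCdef, Finset.sum_sub_distrib, hstar, sub_zero]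
      have h1 : ‖C‖ ≤ δ * ‖wstar - v0‖ := by
        rw [h0]
        calc ‖(N : ℝ)⁻¹ • ∑ n, (Qg n v0 - Qg n wstar)‖
            = (N : ℝ)⁻¹ * ‖∑ n, (Qg n v0 - Qg n wstar)‖ := by
              rw [norm_smul, Real.norm_eq_abs, abs_of_nonneg (by positivity)]
          _ ≤ (N : ℝ)⁻¹ * ∑ n, ‖Qg n v0 - Qg n wstar‖ := by
              gcongr; exact norm_sum_le _ _
          _ ≤ (N : ℝ)⁻¹ * ∑ _n : Fin N, δ * ‖v0 - wstar‖ := by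
              gcongr with n hn; exact hLip n v0 wstar
          _ = δ * ‖wstar - v0‖ := by
              rw [Finset.sum_const, Finset.card_univ, Fintype.card_fin, nsmul_eq_mul,
                norm_sub_rev]
              field_simp
      calc ‖C‖ ^ 2 ≤ (δ * ‖wstar - v0‖) ^ 2 := pow_le_pow_left₀ (norm_nonneg _) h1 2
        _ = δ ^ 2 * R := by rw [hRdef]; ring
    -- per-iterate bound
    have hbound : ∀ i ∈ Finset.range N, ‖w (s+1) i ω - v0‖ ^ 2 ≤
        3 * μ ^ 2 * (N : ℝ) * δ ^ 2 * Sq +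
        (i : ℝ) ^ 2 * (3 * μ ^ 2 * (δ ^ 2 / N * T + δ ^ 2 * R)) := by
      intro i hi
      have hiN : i < N := Finset.mem_range.mp hi
      rw [hrep i hiN.le]
      refine le_trans (norm_add₃_sq_le _ _ _) ?_
      have e1 : ‖-(μ • ∑ j ∈ Finset.range i, A j)‖ ^ 2 =
          μ ^ 2 * ‖∑ j ∈ Finset.range i, A j‖ ^ 2 := by
        rw [norm_neg, norm_smul, mul_pow, Real.norm_eq_abs, sq_abs]
      have e2 : ‖(-((i : ℝ) * μ)) • B‖ ^ 2 = (i : ℝ) ^ 2 * μ ^ 2 * ‖B‖ ^ 2 := by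
        rw [norm_smul, mul_pow, Real.norm_eq_abs, sq_abs, neg_pow]; ring
      have e3 : ‖(-((i : ℝ) * μ)) • C‖ ^ 2 = (i : ℝ) ^ 2 * μ ^ 2 * ‖C‖ ^ 2 := by
        rw [norm_smul, mul_pow, Real.norm_eq_abs, sq_abs, neg_pow]; ring
      have hsumA : ‖∑ j ∈ Finset.range i, A j‖ ^ 2 ≤ (N : ℝ) * (δ ^ 2 * Sq) := by
        calc ‖∑ j ∈ Finset.range i, A j‖ ^ 2
            ≤ (∑ j ∈ Finset.range i, ‖A j‖) ^ 2 :=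
              pow_le_pow_left₀ (norm_nonneg _) (norm_sum_le _ _) 2
          _ ≤ (Finset.range i).card * ∑ j ∈ Finset.range i, ‖A j‖ ^ 2 :=
              sq_sum_le_card_mul_sum_sq
          _ ≤ (N : ℝ) * ∑ j ∈ Finset.range i, (δ ^ 2 * ‖w (s+1) j ω - v0‖ ^ 2) := by
              rw [Finset.card_range]
              have hcard : (i : ℝ) ≤ (N : ℝ) := by exact_mod_cast hiN.le
              refine mul_le_mul hcard (Finset.sum_le_sum fun j hj => ?_)
                (Finset.sum_nonneg fun _ _ => by positivity) hNpos.le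
              have hjN : j < N := lt_of_lt_of_le (Finset.mem_range.mp hj) hiN.le
              calc ‖A j‖ ^ 2 ≤ (δ * ‖w (s+1) j ω - v0‖) ^ 2 :=
                    pow_le_pow_left₀ (norm_nonneg _) (hnormA j hjN) 2
                _ = δ ^ 2 * ‖w (s+1) j ω - v0‖ ^ 2 := by ring
          _ ≤ (N : ℝ) * (δ ^ 2 * Sq) := by
              rw [hSqdef, ← Finset.mul_sum]
              refine mul_le_mul_of_nonneg_left (mul_le_mul_of_nonneg_left ?_ (by positivity))
                hNpos.le
              exact Finset.sum_le_sum_of_subset_of_nonneg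
                (Finset.range_subset_range.mpr hiN.le) (fun _ _ _ => by positivity)
      rw [e1, e2, e3]
      have b1 : μ ^ 2 * ‖∑ j ∈ Finset.range i, A j‖ ^ 2 ≤ μ ^ 2 * ((N : ℝ) * (δ ^ 2 * Sq)) :=
        mul_le_mul_of_nonneg_left hsumA (sq_nonneg μ)
      have b2 : (i : ℝ) ^ 2 * μ ^ 2 * ‖B‖ ^ 2 ≤ (i : ℝ) ^ 2 * μ ^ 2 * (δ ^ 2 / N * T) :=
        mul_le_mul_of_nonneg_left hB2 (by positivity)
      have b3 : (i : ℝ) ^ 2 * μ ^ 2 * ‖C‖ ^ 2 ≤ (i : ℝ) ^ 2 * μ ^ 2 * (δ ^ 2 * R) :=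
        mul_le_mul_of_nonneg_left hCb (by positivity)
      nlinarith [b1, b2, b3]
    -- sum it up
    have hsum : Sq ≤ (N : ℝ) * (3 * μ ^ 2 * (N : ℝ) * δ ^ 2 * Sq) +
        (∑ i ∈ Finset.range N, (i : ℝ) ^ 2) * (3 * μ ^ 2 * (δ ^ 2 / N * T + δ ^ 2 * R)) := by
      calc Sq = ∑ i ∈ Finset.range N, ‖w (s+1) i ω - v0‖ ^ 2 := hSqdef
        _ ≤ ∑ i ∈ Finset.range N, (3 * μ ^ 2 * (N : ℝ) * δ ^ 2 * Sq +
            (i : ℝ) ^ 2 * (3 * μ ^ 2 * (δ ^ 2 / N * T + δ ^ 2 * R))) :=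
            Finset.sum_le_sum hbound
        _ = _ := by
            rw [Finset.sum_add_distrib, Finset.sum_const, Finset.card_range, nsmul_eq_mul,
              ← Finset.sum_mul]
    have hc2 : 0 ≤ 3 * μ ^ 2 * (δ ^ 2 / N * T + δ ^ 2 * R) :=
      mul_nonneg (by positivity)
        (add_nonneg (mul_nonneg (by positivity) hTnn) (mul_nonneg (by positivity) hRnn))
    have hsum2 : (∑ i ∈ Finset.range N, (i : ℝ) ^ 2) *
        (3 * μ ^ 2 * (δ ^ 2 / N * T + δ ^ 2 * R)) ≤
        ((N : ℝ) ^ 3 / 3) * (3 * μ ^ 2 * (δ ^ 2 / N * T + δ ^ 2 * R)) :=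
      mul_le_mul_of_nonneg_right (sum_range_sq_le_cube N) hc2
    have heq : (N : ℝ) * (3 * μ ^ 2 * (N : ℝ) * δ ^ 2 * Sq) +
        ((N : ℝ) ^ 3 / 3) * (3 * μ ^ 2 * (δ ^ 2 / N * T + δ ^ 2 * R)) =
        3 * μ ^ 2 * δ ^ 2 * (N : ℝ) ^ 2 * Sq +
        μ ^ 2 * δ ^ 2 * (N : ℝ) ^ 2 * (T + (N : ℝ) * R) := by
      field_simp
    linarith [hsum, hsum2]
  -- integrate
  have hint1 : ∀ i ∈ Finset.range N,
      Integrable (fun ω => ‖w (s+1) i ω - w (s+1) 0 ω‖ ^ 2) P := by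
    intro i hi
    have h1 := (hkey (s+1)).1 i (Finset.mem_range.mp hi).le
    have h0 := (hkey (s+1)).1 0 (Nat.zero_le N)
    exact hintg _ _ h1.1 h0.1 h1.2 h0.2
  have hint2 : ∀ i ∈ Finset.range N,
      Integrable (fun ω => ‖w s N ω - w s i ω‖ ^ 2) P := by
    intro i hi
    have h1 := (hkey s).1 N le_rfl
    have h0 := (hkey s).1 i (Finset.mem_range.mp hi).le
    exact hintg _ _ h1.1 h0.1 h1.2 h0.2
  have hint3 : Integrable (fun ω => ‖wstar - w (s+1) 0 ω‖ ^ 2) P := by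
    have h0 := (hkey (s+1)).1 0 (Nat.zero_le N)
    exact hintg _ _ measurable_const h0.1
      ((Set.finite_singleton wstar).subset Set.range_const_subset) h0.2
  rw [← MeasureTheory.integral_finset_sum _ hint1, ← MeasureTheory.integral_finset_sum _ hint2]
  have hIS := MeasureTheory.integrable_finset_sum (μ := P) _ hint1
  have hIT := MeasureTheory.integrable_finset_sum (μ := P) _ hint2
  calc (∫ ω, ∑ i ∈ Finset.range N, ‖w (s+1) i ω - w (s+1) 0 ω‖ ^ 2 ∂P)
      ≤ ∫ ω, (3 * μ ^ 2 * δ ^ 2 * (N : ℝ) ^ 2 *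
            (∑ i ∈ Finset.range N, ‖w (s+1) i ω - w (s+1) 0 ω‖ ^ 2) +
          μ ^ 2 * δ ^ 2 * (N : ℝ) ^ 2 *
            ((∑ i ∈ Finset.range N, ‖w s N ω - w s i ω‖ ^ 2) +
              N * ‖wstar - w (s+1) 0 ω‖ ^ 2)) ∂P := by
        refine MeasureTheory.integral_mono hIS ?_ hpt
        exact (hIS.const_mul _).add ((hIT.add (hint3.const_mul _)).const_mul _)
    _ = _ := by
        have hI2 : Integrable (fun ω => (∑ i ∈ Finset.range N, ‖w s N ω - w s i ω‖ ^ 2) +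
            (N : ℝ) * ‖wstar - w (s+1) 0 ω‖ ^ 2) P := hIT.add (hint3.const_mul _)
        have hI2' : Integrable (fun ω => μ ^ 2 * δ ^ 2 * (N : ℝ) ^ 2 *
            ((∑ i ∈ Finset.range N, ‖w s N ω - w s i ω‖ ^ 2) +
              (N : ℝ) * ‖wstar - w (s+1) 0 ω‖ ^ 2)) P := hI2.const_mul _
        have hI1 : Integrable (fun ω => 3 * μ ^ 2 * δ ^ 2 * (N : ℝ) ^ 2 *
            ∑ i ∈ Finset.range N, ‖w (s+1) i ω - w (s+1) 0 ω‖ ^ 2) P := hIS.const_mul _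
        have hI3 : Integrable (fun ω => (N : ℝ) * ‖wstar - w (s+1) 0 ω‖ ^ 2) P :=
          hint3.const_mul _
        rw [MeasureTheory.integral_add hI1 hI2',
          MeasureTheory.integral_const_mul, MeasureTheory.integral_const_mul,
          MeasureTheory.integral_add hIT hI3,
          MeasureTheory.integral_const_mul]
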